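/- Let W_F be the group on generators r0, r0', r1, r1' with relations r_i^2 = 1 for each generator and r0 r0' r1 r1' = 1, and let ℓ be word length with respect to these four generators. Then for every positive integer n, the number of elements w ∈ W_F with ℓ(w) = n equals 4n. -/

import Mathlib

/-- The minimal length of an expression of `w` as a product of elements of the
generating set `S`. -/
noncomputable def wordLength {G : Type*} [Group G] (S : Set G) (w : G) : ℕ :=
  sInf {n | ∃ l : List G, (∀ x ∈ l, x ∈ S) ∧ l.length = n ∧ l.prod = w}

/-- Relations of the elliptic Weyl group of type `A₁⁽¹'¹⁾`:
each generator squares to `1` and `r₀ r₀' r₁ r₁' = 1`. -/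
def ellRels4 : Set (FreeGroup (Fin 4)) :=
  {x | ∃ i, x = (FreeGroup.of i) ^ 2} ∪
  {FreeGroup.of 0 * FreeGroup.of 1 * FreeGroup.of 2 * FreeGroup.of 3}

@[ext] structure EG where
  s : ℤ
  t : ℤ
  e : Bool
deriving DecidableEq

namespace EG

def sgn (e : Bool) : ℤ := cond e (-1) 1

instance : Mul EG := ⟨fun g h => ⟨g.s + sgn g.e * h.s, g.t + sgn g.e * h.t, xor g.e h.e⟩⟩
instance : One EG := ⟨⟨0, 0, false⟩⟩
instance : Inv EG := ⟨fun g => ⟨-(sgn g.e) * g.s, -(sgn g.e) * g.t, g.e⟩⟩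

@[simp] lemma mul_s (g h : EG) : (g * h).s = g.s + sgn g.e * h.s := rfl
@[simp] lemma mul_t (g h : EG) : (g * h).t = g.t + sgn g.e * h.t := rfl
@[simp] lemma mul_e (g h : EG) : (g * h).e = xor g.e h.e := rfl
@[simp] lemma one_s : (1 : EG).s = 0 := rfl
@[simp] lemma one_t : (1 : EG).t = 0 := rfl
@[simp] lemma one_e : (1 : EG).e = false := rfl
@[simp] lemma inv_s (g : EG) : g⁻¹.s = -(sgn g.e) * g.s := rfl
@[simp] lemma inv_t (g : EG) : g⁻¹.t = -(sgn g.e) * g.t := rfl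
@[simp] lemma inv_e (g : EG) : g⁻¹.e = g.e := rfl

lemma sgn_xor (a b : Bool) : sgn (xor a b) = sgn a * sgn b := by
  cases a <;> cases b <;> simp [sgn]

@[simp] lemma sgn_mul_self (a : Bool) : sgn a * sgn a = 1 := by
  cases a <;> simp [sgn]

instance : Group EG where
  mul_assoc a b c := by ext <;> simp [sgn_xor, Bool.xor_assoc] <;> ring
  one_mul a := by ext <;> simp [sgn]
  mul_one a := by ext <;> simp [sgn]
  inv_mul_cancel a := by
    ext <;> simp [sgn_xor]


/-- The four generators. -/
def gen : Fin 4 → EG := ![⟨0, 0, true⟩, ⟨1, 0, true⟩, ⟨1, 1, true⟩, ⟨0, 1, true⟩]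

/-- Length contribution of one coordinate. -/
def D (k : ℤ) (e : Bool) : ℕ := bif e then (2 * k - 1).natAbs else 2 * k.natAbs

/-- The length function. -/
def L (g : EG) : ℕ := max (D g.s g.e) (D g.t g.e)

lemma gen_mul_self (i : Fin 4) : gen i * gen i = 1 := by
  fin_cases i <;> decide

@[simp] lemma L_one : L 1 = 0 := by decide

lemma L_eq_zero {g : EG} (h : L g = 0) : g = 1 := by
  obtain ⟨s, t, e⟩ := g
  cases e <;> simp only [L, D] at h <;> ext <;> simp_all <;> omega

lemma L_mul_gen_le (i : Fin 4) (g : EG) : L (gen i * g) ≤ L g + 1 := by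
  obtain ⟨s, t, e⟩ := g
  fin_cases i <;> cases e <;>
    simp only [L, D, gen, mul_s, mul_t, mul_e, sgn, Matrix.cons_val_zero, Matrix.cons_val_one,
      Matrix.head_cons, Matrix.cons_val_two, Matrix.tail_cons, Matrix.cons_val_three] <;>
    simp <;> omega

lemma descent {g : EG} (hg : g ≠ 1) : ∃ i, L (gen i * g) + 1 = L g := by
  obtain ⟨s, t, e⟩ := g
  have hne : ¬(s = 0 ∧ t = 0 ∧ e = false) := by
    rintro ⟨rfl, rfl, rfl⟩; exact hg rfl
  by_cases hs : 1 ≤ s <;> by_cases ht : 1 ≤ t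
  · refine ⟨2, ?_⟩
    cases e <;> simp only [L, D, gen, mul_s, mul_t, mul_e, sgn, Matrix.cons_val_zero,
      Matrix.cons_val_one, Matrix.head_cons, Matrix.cons_val_two, Matrix.tail_cons,
      Matrix.cons_val_three, if_true, if_false] <;> simp at hne ⊢ <;> omega
  · refine ⟨1, ?_⟩
    cases e <;> simp only [L, D, gen, mul_s, mul_t, mul_e, sgn, Matrix.cons_val_zero,
      Matrix.cons_val_one, Matrix.head_cons, Matrix.cons_val_two, Matrix.tail_cons,
      Matrix.cons_val_three, if_true, if_false] <;> simp at hne ⊢ <;> omega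
  · refine ⟨3, ?_⟩
    cases e <;> simp only [L, D, gen, mul_s, mul_t, mul_e, sgn, Matrix.cons_val_zero,
      Matrix.cons_val_one, Matrix.head_cons, Matrix.cons_val_two, Matrix.tail_cons,
      Matrix.cons_val_three, if_true, if_false] <;> simp at hne ⊢ <;> omega
  · refine ⟨0, ?_⟩
    cases e <;> simp only [L, D, gen, mul_s, mul_t, mul_e, sgn, Matrix.cons_val_zero,
      Matrix.cons_val_one, Matrix.head_cons, Matrix.cons_val_two, Matrix.tail_cons,
      Matrix.cons_val_three, if_true, if_false] <;> simp at hne ⊢ <;> omega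


lemma L_prod_le (l : List EG) (hl : ∀ x ∈ l, x ∈ Set.range gen) :
    L l.prod ≤ l.length := by
  induction l with
  | nil => simp
  | cons x l ih =>
    obtain ⟨i, rfl⟩ := hl x List.mem_cons_self
    have h1 := ih (fun y hy => hl y (List.mem_cons_of_mem _ hy))
    calc L (gen i :: l).prod = L (gen i * l.prod) := by rw [List.prod_cons]
    _ ≤ L l.prod + 1 := L_mul_gen_le i l.prod
    _ ≤ l.length + 1 := by omega
    _ = (gen i :: l).length := by simp

lemma exists_word : ∀ (n : ℕ) (g : EG), L g = n →
    ∃ l : List EG, (∀ x ∈ l, x ∈ Set.range gen) ∧ l.length = n ∧ l.prod = g := by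
  intro n
  induction n with
  | zero => intro g hg; exact ⟨[], by simp, rfl, (L_eq_zero hg).symm⟩
  | succ n ih =>
    intro g hg
    have hg1 : g ≠ 1 := by rintro rfl; simp at hg
    obtain ⟨i, hi⟩ := descent hg1
    obtain ⟨l, h1, h2, h3⟩ := ih (gen i * g) (by omega)
    refine ⟨gen i :: l, ?_, by simp [h2], ?_⟩
    · intro x hx
      rcases List.mem_cons.mp hx with rfl | hx
      · exact ⟨i, rfl⟩
      · exact h1 x hx
    · rw [List.prod_cons, h3, ← mul_assoc, gen_mul_self, one_mul]

lemma wordLength_eq_L (g : EG) : wordLength (Set.range gen) g = L g := by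
  obtain ⟨l, h1, h2, h3⟩ := exists_word (L g) g rfl
  refine le_antisymm (Nat.sInf_le ⟨l, h1, h2, h3⟩) (le_csInf ⟨L g, l, h1, h2, h3⟩ ?_)
  rintro n ⟨l', h1', h2', h3'⟩
  calc L g = L l'.prod := by rw [h3']
  _ ≤ l'.length := L_prod_le l' h1'
  _ = n := h2'


/-! ### Counting elements of given length -/

def emb (e : Bool) : ℤ × ℤ ↪ EG :=
  ⟨fun p => ⟨p.1, p.2, e⟩, by intro p q h; simpa [EG.mk.injEq, Prod.ext_iff] using h⟩

noncomputable def box (a b : ℤ) : Finset (ℤ × ℤ) := Finset.Icc a b ×ˢ Finset.Icc a b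

lemma card_box (a b : ℤ) : (box a b).card = (b + 1 - a).toNat * (b + 1 - a).toNat := by
  simp [box, Int.card_Icc]

lemma box_subset {a b a' b' : ℤ} (h1 : a ≤ a') (h2 : b' ≤ b) : box a' b' ⊆ box a b :=
  Finset.product_subset_product (Finset.Icc_subset_Icc h1 h2) (Finset.Icc_subset_Icc h1 h2)

lemma sphere_even (m : ℕ) (hm : 1 ≤ m) :
    {g : EG | L g = 2 * m} =
      ↑((box (-(m : ℤ)) m \ box (-(m : ℤ) + 1) ((m : ℤ) - 1)).map (emb false)) := by
  ext ⟨s, t, e⟩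
  simp only [Set.mem_setOf_eq, Finset.coe_map, Set.mem_image, Finset.mem_coe, Finset.mem_sdiff,
    box, Finset.mem_product, Finset.mem_Icc, emb, Function.Embedding.coeFn_mk, Prod.exists,
    EG.mk.injEq, L, D]
  cases e
  · simp only [Bool.cond_false, Bool.cond_true, eq_self_iff_true, and_true]
    constructor
    · intro h; exact ⟨s, t, by omega, rfl⟩
    · rintro ⟨a, b, hab, ⟨⟩⟩; omega
  · simp only [Bool.cond_false, Bool.cond_true]
    constructor
    · intro h; exfalso; omega
    · rintro ⟨a, b, hab, ⟨⟩⟩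

lemma sphere_odd (m : ℕ) :
    {g : EG | L g = 2 * m + 1} =
      ↑((box (-(m : ℤ)) ((m : ℤ) + 1) \ box (-(m : ℤ) + 1) m).map (emb true)) := by
  ext ⟨s, t, e⟩
  simp only [Set.mem_setOf_eq, Finset.coe_map, Set.mem_image, Finset.mem_coe, Finset.mem_sdiff,
    box, Finset.mem_product, Finset.mem_Icc, emb, Function.Embedding.coeFn_mk, Prod.exists,
    EG.mk.injEq, L, D]
  cases e
  · simp only [Bool.cond_false, Bool.cond_true]
    constructor
    · intro h; exfalso; omega
    · rintro ⟨a, b, hab, ⟨⟩⟩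
  · simp only [Bool.cond_false, Bool.cond_true, eq_self_iff_true, and_true]
    constructor
    · intro h; exact ⟨s, t, by omega, rfl⟩
    · rintro ⟨a, b, hab, ⟨⟩⟩; omega

lemma ncard_even (m : ℕ) (hm : 1 ≤ m) : {g : EG | L g = 2 * m}.ncard = 4 * (2 * m) := by
  rw [sphere_even m hm, Set.ncard_coe_finset, Finset.card_map,
    Finset.card_sdiff_of_subset (box_subset (by omega) (by omega)), card_box, card_box]
  have h1 : ((m : ℤ) + 1 - (-(m : ℤ))).toNat = 2 * m + 1 := by omega
  have h2 : ((m : ℤ) - 1 + 1 - (-(m : ℤ) + 1)).toNat = 2 * m - 1 := by omega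
  rw [h1, h2]
  obtain ⟨k, rfl⟩ : ∃ k, m = k + 1 := ⟨m - 1, by omega⟩
  have e1 : (2 * (k + 1) + 1) * (2 * (k + 1) + 1) = 4 * (k * k) + 12 * k + 9 := by ring
  have e2 : 2 * (k + 1) - 1 = 2 * k + 1 := by omega
  have e3 : (2 * k + 1) * (2 * k + 1) = 4 * (k * k) + 4 * k + 1 := by ring
  rw [e1, e2, e3]
  set q := k * k
  omega

lemma ncard_odd (m : ℕ) : {g : EG | L g = 2 * m + 1}.ncard = 4 * (2 * m + 1) := by
  rw [sphere_odd m, Set.ncard_coe_finset, Finset.card_map,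
    Finset.card_sdiff_of_subset (box_subset (by omega) (by omega)), card_box, card_box]
  have h1 : ((m : ℤ) + 1 + 1 - (-(m : ℤ))).toNat = 2 * m + 2 := by omega
  have h2 : ((m : ℤ) + 1 - (-(m : ℤ) + 1)).toNat = 2 * m := by omega
  rw [h1, h2]
  have e1 : (2 * m + 2) * (2 * m + 2) = 4 * (m * m) + 8 * m + 4 := by ring
  have e2 : (2 * m) * (2 * m) = 4 * (m * m) := by ring
  rw [e1, e2]
  set q := m * m
  omega

lemma count_EG (n : ℕ) (hn : 0 < n) :
    {g : EG | wordLength (Set.range gen) g = n}.ncard = 4 * n := by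
  have hset : {g : EG | wordLength (Set.range gen) g = n} = {g : EG | L g = n} := by
    ext g; simp [wordLength_eq_L]
  rw [hset]
  rcases Nat.even_or_odd n with ⟨m, hm⟩ | ⟨m, hm⟩
  · have h : n = 2 * m := by omega
    subst h
    exact ncard_even m (by omega)
  · subst hm
    exact ncard_odd m

end EG


namespace EllP

abbrev P := PresentedGroup ellRels4

lemma rels_hold : ∀ r ∈ ellRels4, FreeGroup.lift EG.gen r = 1 := by
  rintro r (⟨i, rfl⟩ | rfl)
  · rw [map_pow, FreeGroup.lift_apply_of]
    fin_cases i <;> decide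
  · simp only [map_mul, FreeGroup.lift_apply_of]
    decide

/-- The canonical map to the concrete model. -/
def φ : P →* EG := PresentedGroup.toGroup rels_hold

lemma rel_eq_one {r : FreeGroup (Fin 4)} (h : r ∈ ellRels4) :
    PresentedGroup.mk ellRels4 r = 1 :=
  (QuotientGroup.eq_one_iff r).mpr (Subgroup.subset_normalClosure h)

def A : P := PresentedGroup.of 0
def B : P := PresentedGroup.of 1
def C : P := PresentedGroup.of 2
def Dg : P := PresentedGroup.of 3

lemma sq (i : Fin 4) : (PresentedGroup.of i : P) * PresentedGroup.of i = 1 := by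
  have h := rel_eq_one (Set.mem_union_left _ ⟨i, rfl⟩)
  rw [map_pow, pow_two] at h
  exact h

lemma hA : A * A = 1 := sq 0
lemma hB : B * B = 1 := sq 1
lemma hC : C * C = 1 := sq 2
lemma hD : Dg * Dg = 1 := sq 3

lemma hA' (x : P) : A * (A * x) = x := by rw [← mul_assoc, hA, one_mul]
lemma hB' (x : P) : B * (B * x) = x := by rw [← mul_assoc, hB, one_mul]
lemma hC' (x : P) : C * (C * x) = x := by rw [← mul_assoc, hC, one_mul]
lemma hD' (x : P) : Dg * (Dg * x) = x := by rw [← mul_assoc, hD, one_mul]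

lemma habcd : A * (B * (C * Dg)) = 1 := by
  have h := rel_eq_one (Set.mem_union_right _ rfl)
  simp only [map_mul, mul_assoc] at h
  exact h

lemma hd : Dg = C * (B * A) := by
  have h1 : B * (C * Dg) = A := by
    have := congrArg (fun x => A * x) habcd
    simpa only [hA', mul_one] using this
  have h2 : C * Dg = B * A := by
    have := congrArg (fun x => B * x) h1
    simpa only [hB'] using this
  have := congrArg (fun x => C * x) h2
  simpa only [hC'] using this

lemma habc : A * (B * C) = Dg := by
  have h := congrArg (fun x => x * Dg) habcd
  simp only [mul_assoc, one_mul] at h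
  rw [hD, mul_one] at h
  exact h

lemma e1 : A * (B * C) = C * (B * A) := habc.trans hd

lemma key2 : A * (C * (B * A)) = B * C := by
  have := congrArg (fun x => A * x) e1
  simpa only [hA'] using this.symm

lemma bca : B * (C * A) = A * (C * B) := by
  have := congrArg (fun x => x * A) key2.symm
  simpa only [mul_assoc, hA, mul_one] using this

lemma key1 : B * (A * (C * B)) = C * A := by
  have := congrArg (fun x => B * x) bca
  simpa only [hB'] using this.symm

/-- Translation generators. -/
def T1 : P := B * A
def T2 : P := C * B

lemma commT : Commute T1 T2 := by
  show (B * A) * (C * B) = (C * B) * (B * A)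
  have hl : (B * A) * (C * B) = C * A := by rw [mul_assoc]; exact key1
  have hr : (C * B) * (B * A) = C * A := by rw [mul_assoc, hB']
  exact hl.trans hr.symm

lemma conj1 : A * T1 * A = T1⁻¹ := by
  show A * (B * A) * A = (B * A)⁻¹
  rw [mul_inv_rev, inv_eq_of_mul_eq_one_right hA, inv_eq_of_mul_eq_one_right hB,
    mul_assoc, mul_assoc, hA, mul_one]

lemma conj2 : A * T2 * A = T2⁻¹ := by
  show A * (C * B) * A = (C * B)⁻¹
  rw [mul_inv_rev, inv_eq_of_mul_eq_one_right hB, inv_eq_of_mul_eq_one_right hC,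
    mul_assoc, mul_assoc]
  exact key2

lemma invA : A⁻¹ = A := inv_eq_of_mul_eq_one_right hA

lemma conj1_zpow (k : ℤ) : A * T1 ^ k * A = T1 ^ (-k) := by
  have h : A * T1 ^ k * A⁻¹ = (A * T1 * A⁻¹) ^ k := conj_zpow.symm
  rw [invA] at h
  rw [h, conj1, inv_zpow, zpow_neg]

lemma conj2_zpow (k : ℤ) : A * T2 ^ k * A = T2 ^ (-k) := by
  have h : A * T2 ^ k * A⁻¹ = (A * T2 * A⁻¹) ^ k := conj_zpow.symm
  rw [invA] at h
  rw [h, conj2, inv_zpow, zpow_neg]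

lemma swap1 (k : ℤ) (x : P) : A * (T1 ^ k * x) = T1 ^ (-k) * (A * x) := by
  have h := congrArg (fun y => y * (A * x)) (conj1_zpow k)
  simpa only [mul_assoc, hA', mul_one] using h

lemma swap2 (k : ℤ) (x : P) : A * (T2 ^ k * x) = T2 ^ (-k) * (A * x) := by
  have h := congrArg (fun y => y * (A * x)) (conj2_zpow k)
  simpa only [mul_assoc, hA', mul_one] using h

lemma TT' (x u y v : ℤ) (w : P) :
    T1 ^ (x + u) * (T2 ^ (y + v) * w) = T1 ^ x * (T2 ^ y * (T1 ^ u * (T2 ^ v * w))) := by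
  rw [zpow_add, zpow_add]
  simp only [mul_assoc]
  rw [← mul_assoc (T1 ^ u) (T2 ^ y), (commT.zpow_zpow u y).eq, mul_assoc]

/-- Inverse map `EG → P`. -/
def ψf (g : EG) : P := T1 ^ g.s * (T2 ^ g.t * (cond g.e A 1))

lemma ψf_mul (g h : EG) : ψf (g * h) = ψf g * ψf h := by
  obtain ⟨gs, gt, ge⟩ := g
  obtain ⟨hs, ht, he⟩ := h
  cases ge
  · simp only [ψf, EG.mul_s, EG.mul_t, EG.mul_e, EG.sgn, one_mul, Bool.false_xor,
      Bool.cond_false, Bool.cond_true]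
    rw [TT', mul_one, mul_assoc]
  · simp only [ψf, EG.mul_s, EG.mul_t, EG.mul_e, EG.sgn, Bool.cond_true, Bool.cond_false,
      Bool.true_xor, neg_one_mul]
    cases he
    · simp only [Bool.not_false, Bool.cond_true, Bool.cond_false]
      rw [TT', mul_assoc, mul_assoc, swap1, swap2, mul_one]
    · simp only [Bool.not_true, Bool.cond_true, Bool.cond_false]
      rw [TT', mul_assoc, mul_assoc, swap1, swap2, hA]

lemma phi_of (i : Fin 4) : φ (PresentedGroup.of i) = EG.gen i := PresentedGroup.toGroup.of _

lemma phi_A : φ A = ⟨0, 0, true⟩ := by rw [A, phi_of]; rfl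
lemma phi_T1 : φ T1 = ⟨1, 0, false⟩ := by
  rw [T1, map_mul, B, A, phi_of, phi_of]; decide
lemma phi_T2 : φ T2 = ⟨0, 1, false⟩ := by
  rw [T2, map_mul, C, B, phi_of, phi_of]; decide

lemma EG_zpow_flat (a b : ℤ) (k : ℤ) : (⟨a, b, false⟩ : EG) ^ k = ⟨k * a, k * b, false⟩ := by
  induction k using Int.induction_on with
  | zero => rw [zpow_zero]; ext <;> simp
  | succ n ih =>
    rw [zpow_add_one, ih]
    ext <;> simp [EG.sgn] <;> ring
  | pred n ih =>
    rw [zpow_sub_one, ih]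
    have hinv : (⟨a, b, false⟩ : EG)⁻¹ = ⟨-a, -b, false⟩ := by ext <;> simp [EG.sgn]
    rw [hinv]; ext <;> simp [EG.sgn] <;> ring

lemma phi_psi (g : EG) : φ (ψf g) = g := by
  obtain ⟨s, t, e⟩ := g
  simp only [ψf, map_mul, map_zpow, phi_T1, phi_T2]
  rw [EG_zpow_flat, EG_zpow_flat]
  cases e
  · simp only [Bool.cond_false, map_one, mul_one]
    ext <;> simp [EG.sgn] <;> ring
  · simp only [Bool.cond_true, phi_A]
    ext <;> simp [EG.sgn] <;> ring

lemma psi_gen0 : ψf ⟨0, 0, true⟩ = A := by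
  simp [ψf]

lemma psi_gen1 : ψf ⟨1, 0, true⟩ = B := by
  show T1 ^ (1 : ℤ) * (T2 ^ (0 : ℤ) * A) = B
  rw [zpow_one, zpow_zero, one_mul, T1, mul_assoc, hA, mul_one]

lemma psi_gen2 : ψf ⟨1, 1, true⟩ = C := by
  show T1 ^ (1 : ℤ) * (T2 ^ (1 : ℤ) * A) = C
  rw [zpow_one, zpow_one, T1, T2, mul_assoc C B A, mul_assoc, key2, hB']

lemma psi_gen3 : ψf ⟨0, 1, true⟩ = Dg := by
  show T1 ^ (0 : ℤ) * (T2 ^ (1 : ℤ) * A) = Dg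
  rw [zpow_zero, zpow_one, one_mul, T2, mul_assoc]
  exact hd.symm

/-- `ψf` as a monoid hom. -/
def Ψ : EG →* P :=
  { toFun := ψf,
    map_one' := by simp [ψf],
    map_mul' := ψf_mul }

lemma psi_phi (w : P) : ψf (φ w) = w := by
  have h : Ψ.comp φ = MonoidHom.id P := by
    apply PresentedGroup.ext
    intro i
    fin_cases i
    · simp only [MonoidHom.comp_apply, MonoidHom.id_apply, phi_of]
      exact psi_gen0
    · simp only [MonoidHom.comp_apply, MonoidHom.id_apply, phi_of]
      exact psi_gen1
    · simp only [MonoidHom.comp_apply, MonoidHom.id_apply, phi_of]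
      exact psi_gen2
    · simp only [MonoidHom.comp_apply, MonoidHom.id_apply, phi_of]
      exact psi_gen3
  exact DFunLike.congr_fun h w

/-- The isomorphism between the presented group and the concrete model. -/
def eqv : P ≃* EG :=
  { toFun := φ, invFun := ψf, left_inv := psi_phi, right_inv := phi_psi,
    map_mul' := map_mul φ }

lemma wordLength_map {G H : Type*} [Group G] [Group H] (e : G ≃* H) (S : Set G) (w : G) :
    wordLength S w = wordLength (⇑e '' S) (e w) := by
  unfold wordLength
  congr 1
  ext n
  constructor
  · rintro ⟨l, h1, h2, h3⟩
    refine ⟨l.map e, ?_, by simp [h2], ?_⟩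
    · intro y hy
      rcases List.mem_map.mp hy with ⟨x, hx, rfl⟩
      exact ⟨x, h1 x hx, rfl⟩
    · rw [← h3]
      exact (map_list_prod (e : G →* H) l).symm
  · rintro ⟨l, h1, h2, h3⟩
    refine ⟨l.map e.symm, ?_, by simp [h2], ?_⟩
    · intro y hy
      rcases List.mem_map.mp hy with ⟨x, hx, rfl⟩
      rcases h1 x hx with ⟨p, hp, rfl⟩
      simpa using hp
    · calc (l.map e.symm).prod = e.symm l.prod := (map_list_prod (e.symm : H →* G) l).symm
      _ = e.symm (e w) := by rw [h3]
      _ = w := e.symm_apply_apply w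

lemma himg : ⇑eqv '' Set.range (PresentedGroup.of (rels := ellRels4)) = Set.range EG.gen := by
  have hfun : ⇑eqv ∘ (PresentedGroup.of (rels := ellRels4)) = EG.gen := funext phi_of
  rw [← Set.range_comp, hfun]

end EllP

theorem stmt14 :
    ∀ n : ℕ, 0 < n →
      {w : PresentedGroup ellRels4 |
        wordLength (Set.range (PresentedGroup.of (rels := ellRels4))) w = n}.ncard
        = 4 * n := by
  intro n hn
  have htrans : ∀ w : PresentedGroup ellRels4,
      wordLength (Set.range (PresentedGroup.of (rels := ellRels4))) w =
        wordLength (Set.range EG.gen) (EllP.eqv w) := by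
    intro w
    rw [EllP.wordLength_map EllP.eqv _ w, EllP.himg]
  have hset : {w : PresentedGroup ellRels4 |
      wordLength (Set.range (PresentedGroup.of (rels := ellRels4))) w = n} =
      ⇑EllP.eqv.symm '' {g : EG | wordLength (Set.range EG.gen) g = n} := by
    ext w
    simp only [Set.mem_setOf_eq, Set.mem_image, htrans w]
    constructor
    · intro h
      exact ⟨EllP.eqv w, h, EllP.eqv.symm_apply_apply w⟩
    · rintro ⟨g, hg, rfl⟩
      simpa using hg
  rw [hset, Set.ncard_image_of_injective _ EllP.eqv.symm.injective]
  exact EG.count_EG n hn
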